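/- arXiv:math/9905194 — 4 statements merged into one kernel-verified Lean document; each statement's English description precedes it below -/
import Mathlib

section
/- If S ⊆ ℤ² is such that every x ∈ S has at most 3 neighbors in S (i.e. N_S(x) ≤ 3 for all x ∈ S), then the upper density of S is at most 1/2. -/
open Filter

/-- `y` is a neighbor of `x` in the 8-point (Moore) neighborhood of `ℤ²`. -/
def IsNbr (x y : ℤ × ℤ) : Prop :=
  y ≠ x ∧ |y.1 - x.1| ≤ 1 ∧ |y.2 - x.2| ≤ 1

/-- `N_S(x)`: the number of neighbors of `x` lying in `S`. -/
noncomputable def nbrCount (S : Set (ℤ × ℤ)) (x : ℤ × ℤ) : ℕ :=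
  Set.ncard {y ∈ S | IsNbr x y}

/-- The box `B_r = {x : |x₁| < r, |x₂| < r}`. -/
def box (r : ℕ) : Set (ℤ × ℤ) :=
  {x | |x.1| < (r : ℤ) ∧ |x.2| < (r : ℤ)}

/-- The upper density of `S ⊆ ℤ²`: `limsup_{r → ∞} |S ∩ B_r| / (2r-1)²`. -/
noncomputable def upperDensity (S : Set (ℤ × ℤ)) : ℝ :=
  limsup (fun r : ℕ => (Set.ncard (S ∩ box r) : ℝ) / (2 * (r : ℝ) - 1) ^ 2) atTop

attribute [local instance] Classical.propDecidable

def P6 (u0 v0 u1 v1 u2 v2 : Bool) : ℤ :=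
  (bif !u1 && v1 && !(u0 && u2) then 1 else 0) +
  (bif !u0 && v0 && u1 && v1 && !u2 && v2 then 1 else 0)

def A6 (u0 v0 u1 v1 u2 v2 : Bool) : ℤ :=
  P6 u0 v0 u1 v1 u2 v2 - P6 v0 u0 v1 u1 v2 u2

def bnat (b : Bool) : ℕ := cond b 1 0
def bint (b : Bool) : ℤ := cond b 1 0

lemma A6_bounds : ∀ u0 v0 u1 v1 u2 v2 : Bool,
    -1 ≤ A6 u0 v0 u1 v1 u2 v2 ∧ A6 u0 v0 u1 v1 u2 v2 ≤ 1 := by decide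

lemma cert : ∀ bmm bmo bmp bom boo bop bpm bpo bpp : Bool,
    (boo = true → bnat bmm + bnat bmo + bnat bmp + bnat bom + bnat bop +
      bnat bpm + bnat bpo + bnat bpp ≤ 3) →
    4 * bint boo - 2 ≤
      (A6 bmm bom bmo boo bmp bop - A6 bom bpm boo bpo bop bpp) +
      (A6 bmm bmo bom boo bpm bpo - A6 bmo bmp boo bop bpo bpp) := by decide

def D8 : Finset (ℤ × ℤ) := {(-1,-1),(-1,0),(-1,1),(0,-1),(0,1),(1,-1),(1,0),(1,1)}

lemma isNbr_iff (x y : ℤ × ℤ) : IsNbr x y ↔ y ∈ D8.image (x + ·) := by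
  unfold IsNbr D8
  simp only [Finset.image_insert, Finset.image_singleton, Finset.mem_insert,
    Finset.mem_singleton, Prod.ext_iff, Prod.fst_add, Prod.snd_add, ne_eq, abs_le]
  constructor
  · rintro ⟨hne, ⟨h1a, h1b⟩, h2a, h2b⟩
    omega
  · rintro h
    refine ⟨fun hc => ?_, by omega, by omega⟩
    omega

noncomputable def chi (S : Set (ℤ × ℤ)) (y : ℤ × ℤ) : Bool := decide (y ∈ S)

lemma nbr_sum (S : Set (ℤ × ℤ)) (x : ℤ × ℤ) :
    bnat (chi S (x + (-1,-1))) + bnat (chi S (x + (-1,0))) + bnat (chi S (x + (-1,1))) +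
    bnat (chi S (x + (0,-1))) + bnat (chi S (x + (0,1))) + bnat (chi S (x + (1,-1))) +
    bnat (chi S (x + (1,0))) + bnat (chi S (x + (1,1))) = nbrCount S x := by
  have h1 : {y ∈ S | IsNbr x y} = ↑((D8.image (x + ·)).filter (· ∈ S)) := by
    ext y
    simp [isNbr_iff, and_comm]
  have h2 : nbrCount S x = ((D8.image (x + ·)).filter (· ∈ S)).card := by
    rw [nbrCount, h1, Set.ncard_coe_finset]
  rw [h2, Finset.card_filter, Finset.sum_image (by intro a _ b _ h; exact add_left_cancel h)]
  have hb : ∀ y : ℤ × ℤ, (if y ∈ S then 1 else 0) = bnat (chi S y) := by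
    intro y
    by_cases h : y ∈ S <;> simp [h, chi, bnat]
  unfold D8
  rw [Finset.sum_insert (by decide), Finset.sum_insert (by decide),
    Finset.sum_insert (by decide), Finset.sum_insert (by decide),
    Finset.sum_insert (by decide), Finset.sum_insert (by decide),
    Finset.sum_insert (by decide), Finset.sum_singleton]
  simp only [hb]
  ring

noncomputable def FL (S : Set (ℤ × ℤ)) (x : ℤ × ℤ) : ℤ :=
  A6 (chi S (x + (-1,-1))) (chi S (x + (0,-1))) (chi S (x + (-1,0)))
     (chi S x) (chi S (x + (-1,1))) (chi S (x + (0,1)))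

noncomputable def FB (S : Set (ℤ × ℤ)) (x : ℤ × ℤ) : ℤ :=
  A6 (chi S (x + (-1,-1))) (chi S (x + (-1,0))) (chi S (x + (0,-1)))
     (chi S x) (chi S (x + (1,-1))) (chi S (x + (1,0)))

lemma local_ineq (S : Set (ℤ × ℤ)) (h : ∀ x ∈ S, nbrCount S x ≤ 3) (x : ℤ × ℤ) :
    4 * bint (chi S x) - 2 ≤
      (FL S x - FL S (x + (1,0))) + (FB S x - FB S (x + (0,1))) := by
  have hx : chi S x = true → bnat (chi S (x + (-1,-1))) + bnat (chi S (x + (-1,0))) +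
      bnat (chi S (x + (-1,1))) + bnat (chi S (x + (0,-1))) + bnat (chi S (x + (0,1))) +
      bnat (chi S (x + (1,-1))) + bnat (chi S (x + (1,0))) + bnat (chi S (x + (1,1))) ≤ 3 := by
    intro hc
    rw [nbr_sum]
    exact h x (of_decide_eq_true hc)
  have e1 : x + ((1:ℤ),(0:ℤ)) + (-1,-1) = x + (0,-1) := by ext <;> simp <;> ring
  have e2 : x + ((1:ℤ),(0:ℤ)) + (0,-1) = x + (1,-1) := by ext <;> simp <;> ring
  have e3 : x + ((1:ℤ),(0:ℤ)) + (-1,0) = x := by ext <;> simp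
  have e4 : x + ((1:ℤ),(0:ℤ)) + (-1,1) = x + (0,1) := by ext <;> simp <;> ring
  have e5 : x + ((1:ℤ),(0:ℤ)) + (0,1) = x + (1,1) := by ext <;> simp <;> ring
  have f1 : x + ((0:ℤ),(1:ℤ)) + (-1,-1) = x + (-1,0) := by ext <;> simp <;> ring
  have f2 : x + ((0:ℤ),(1:ℤ)) + (-1,0) = x + (-1,1) := by ext <;> simp <;> ring
  have f3 : x + ((0:ℤ),(1:ℤ)) + (0,-1) = x := by ext <;> simp
  have f4 : x + ((0:ℤ),(1:ℤ)) + (1,-1) = x + (1,0) := by ext <;> simp <;> ring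
  have f5 : x + ((0:ℤ),(1:ℤ)) + (1,0) = x + (1,1) := by ext <;> simp <;> ring
  have := cert (chi S (x + (-1,-1))) (chi S (x + (-1,0))) (chi S (x + (-1,1)))
    (chi S (x + (0,-1))) (chi S x) (chi S (x + (0,1))) (chi S (x + (1,-1)))
    (chi S (x + (1,0))) (chi S (x + (1,1))) hx
  unfold FL FB
  rw [e1, e2, e3, e4, e5, f1, f2, f3, f4, f5]
  exact this

lemma telescope (G : ℤ → ℤ) (hG : ∀ z, -1 ≤ G z ∧ G z ≤ 1) (a : ℤ) (n : ℕ) :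
    ∑ i ∈ Finset.range n, (G (a + i) - G (a + i + 1)) ≤ 2 := by
  have key : ∑ i ∈ Finset.range n, (G (a + i) - G (a + i + 1)) =
      G (a + (0:ℕ)) - G (a + (n:ℕ)) := by
    rw [← Finset.sum_range_sub' (fun i : ℕ => G (a + i)) n]
    apply Finset.sum_congr rfl
    intro i _
    congr 2
    push_cast
    ring
  rw [key]
  have h1 := hG (a + (0:ℕ))
  have h2 := hG (a + (n:ℕ))
  omega

lemma box_count (S : Set (ℤ × ℤ)) (h : ∀ x ∈ S, nbrCount S x ≤ 3) (r : ℕ) (hr : 1 ≤ r) :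
    4 * ((S ∩ box r).ncard : ℤ) ≤ 2 * (2 * (r:ℤ) - 1)^2 + 4 * (2 * (r:ℤ) - 1) := by
  set n : ℕ := 2 * r - 1 with hn
  have hnz : (n : ℤ) = 2 * (r:ℤ) - 1 := by omega
  set I : Finset ℤ := Finset.Icc (1 - (r:ℤ)) ((r:ℤ) - 1) with hIdef
  have hI : I = (Finset.range n).map ⟨fun i : ℕ => 1 - (r:ℤ) + i, fun a b hab => by simp only [add_right_inj, Nat.cast_inj] at hab; exact hab⟩ := by
    ext z
    simp only [hIdef, Finset.mem_Icc, Finset.mem_map, Finset.mem_range,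
      Function.Embedding.coeFn_mk]
    constructor
    · rintro ⟨h1, h2⟩
      exact ⟨(z - (1 - (r:ℤ))).toNat, by omega, by change 1 - (r:ℤ) + ((z - (1 - (r:ℤ))).toNat : ℤ) = z; omega⟩
    · rintro ⟨i, hi, rfl⟩
      change 1 - (r:ℤ) ≤ 1 - (r:ℤ) + (i:ℤ) ∧ 1 - (r:ℤ) + (i:ℤ) ≤ (r:ℤ) - 1
      omega
  have hcardI : I.card = n := by rw [hI, Finset.card_map, Finset.card_range]
  -- box as finset
  have hbox : S ∩ box r = ↑((I ×ˢ I).filter (· ∈ S)) := by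
    ext y
    simp only [Set.mem_inter_iff, box, Set.mem_setOf_eq, Finset.coe_filter,
      Finset.mem_product, hIdef, Finset.mem_Icc, abs_lt]
    constructor
    · rintro ⟨hS, ⟨a1, a2⟩, b1, b2⟩
      exact ⟨⟨⟨by omega, by omega⟩, by omega, by omega⟩, hS⟩
    · rintro ⟨⟨⟨a1, a2⟩, b1, b2⟩, hS⟩
      exact ⟨hS, ⟨by omega, by omega⟩, by omega, by omega⟩
  have hcount : ((S ∩ box r).ncard : ℤ) = (((I ×ˢ I).filter (· ∈ S)).card : ℤ) := by
    rw [hbox, Set.ncard_coe_finset]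
  -- sum of indicators
  have hsum_ind : ∑ x ∈ I ×ˢ I, bint (chi S x) = (((I ×ˢ I).filter (· ∈ S)).card : ℤ) := by
    rw [Finset.card_filter]
    push_cast
    apply Finset.sum_congr rfl
    intro y _
    by_cases hy : y ∈ S <;> simp [hy, chi, bint]
  -- the key pointwise sum
  have key : ∑ x ∈ I ×ˢ I, (4 * bint (chi S x) - 2) ≤
      ∑ x ∈ I ×ˢ I, ((FL S x - FL S (x + (1,0))) + (FB S x - FB S (x + (0,1)))) :=
    Finset.sum_le_sum (fun x _ => local_ineq S h x)
  -- telescoping bounds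
  have hFLb : ∀ x : ℤ × ℤ, -1 ≤ FL S x ∧ FL S x ≤ 1 := fun x => A6_bounds _ _ _ _ _ _
  have hFBb : ∀ x : ℤ × ℤ, -1 ≤ FB S x ∧ FB S x ≤ 1 := fun x => A6_bounds _ _ _ _ _ _
  have tele1 : ∑ x ∈ I ×ˢ I, (FL S x - FL S (x + (1,0))) ≤ 2 * n := by
    rw [Finset.sum_product, Finset.sum_comm]
    have : ∀ b ∈ I, ∑ a ∈ I, (FL S (a, b) - FL S ((a, b) + (1,0))) ≤ 2 := by
      intro b _
      have hpt : ∀ a : ℤ, (a, b) + ((1:ℤ), (0:ℤ)) = (a + 1, b) := by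
        intro a; ext <;> simp
      calc ∑ a ∈ I, (FL S (a, b) - FL S ((a, b) + (1,0)))
          = ∑ i ∈ Finset.range n, (FL S (1 - (r:ℤ) + i, b) - FL S (1 - (r:ℤ) + i + 1, b)) := by
            rw [hI, Finset.sum_map]
            apply Finset.sum_congr rfl
            intro i _
            simp only [Function.Embedding.coeFn_mk, hpt]; rfl
        _ ≤ 2 := telescope (fun z => FL S (z, b)) (fun z => hFLb (z, b)) (1 - (r:ℤ)) n
    calc ∑ b ∈ I, ∑ a ∈ I, (FL S (a, b) - FL S ((a, b) + (1,0)))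
        ≤ ∑ _b ∈ I, 2 := Finset.sum_le_sum this
      _ = 2 * n := by rw [Finset.sum_const, hcardI]; ring
  have tele2 : ∑ x ∈ I ×ˢ I, (FB S x - FB S (x + (0,1))) ≤ 2 * n := by
    rw [Finset.sum_product]
    have : ∀ a ∈ I, ∑ b ∈ I, (FB S (a, b) - FB S ((a, b) + (0,1))) ≤ 2 := by
      intro a _
      have hpt : ∀ b : ℤ, (a, b) + ((0:ℤ), (1:ℤ)) = (a, b + 1) := by
        intro b; ext <;> simp
      calc ∑ b ∈ I, (FB S (a, b) - FB S ((a, b) + (0,1)))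
          = ∑ i ∈ Finset.range n, (FB S (a, 1 - (r:ℤ) + i) - FB S (a, 1 - (r:ℤ) + i + 1)) := by
            rw [hI, Finset.sum_map]
            apply Finset.sum_congr rfl
            intro i _
            simp only [Function.Embedding.coeFn_mk, hpt]; rfl
        _ ≤ 2 := telescope (fun z => FB S (a, z)) (fun z => hFBb (a, z)) (1 - (r:ℤ)) n
    calc ∑ a ∈ I, ∑ b ∈ I, (FB S (a, b) - FB S ((a, b) + (0,1)))
        ≤ ∑ _a ∈ I, 2 := Finset.sum_le_sum this
      _ = 2 * n := by rw [Finset.sum_const, hcardI]; ring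
  have lhs_eq : ∑ x ∈ I ×ˢ I, (4 * bint (chi S x) - 2) =
      4 * ((S ∩ box r).ncard : ℤ) - 2 * (n : ℤ)^2 := by
    rw [Finset.sum_sub_distrib, ← Finset.mul_sum, hsum_ind, ← hcount, Finset.sum_const,
      Finset.card_product, hcardI]
    push_cast
    ring
  rw [Finset.sum_add_distrib] at key
  rw [lhs_eq] at key
  have : 4 * ((S ∩ box r).ncard : ℤ) - 2 * (n:ℤ)^2 ≤ 2 * n + 2 * n := le_trans key (by linarith)
  rw [hnz] at this
  linarith


theorem conjectureA (S : Set (ℤ × ℤ)) (h : ∀ x ∈ S, nbrCount S x ≤ 3) :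
    upperDensity S ≤ 1 / 2 := by
  set f : ℕ → ℝ := fun r : ℕ => (Set.ncard (S ∩ box r) : ℝ) / (2 * (r : ℝ) - 1) ^ 2 with hf
  have hfr : ∀ r : ℕ, 1 ≤ r → f r ≤ 1 / 2 + (2 * (r : ℝ) - 1)⁻¹ := by
    intro r hr
    have hc := box_count S h r hr
    have hm : (1 : ℝ) ≤ 2 * (r : ℝ) - 1 := by
      have : (1 : ℝ) ≤ (r : ℝ) := by exact_mod_cast hr
      linarith
    have hm0 : (0 : ℝ) < 2 * (r : ℝ) - 1 := by linarith
    have hc' : 4 * ((Set.ncard (S ∩ box r) : ℝ)) ≤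
        2 * (2 * (r : ℝ) - 1) ^ 2 + 4 * (2 * (r : ℝ) - 1) := by exact_mod_cast hc
    rw [hf]
    simp only []
    rw [div_le_iff₀ (by positivity)]
    have hinv : (2 * (r : ℝ) - 1)⁻¹ * (2 * (r : ℝ) - 1) = 1 := inv_mul_cancel₀ hm0.ne'
    nlinarith [hinv]
  have key : ∀ ε : ℝ, 0 < ε → upperDensity S ≤ 1 / 2 + ε := by
    intro ε hε
    have hev : ∀ᶠ r in Filter.atTop, f r ≤ 1 / 2 + ε := by
      rw [Filter.eventually_atTop]
      refine ⟨max 1 ⌈ε⁻¹⌉₊, fun r hr => ?_⟩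
      have hr1 : 1 ≤ r := le_trans (le_max_left _ _) hr
      have hrc : (⌈ε⁻¹⌉₊ : ℝ) ≤ (r : ℝ) := by
        exact_mod_cast le_trans (le_max_right _ _) hr
      have hεinv : ε⁻¹ ≤ 2 * (r : ℝ) - 1 := by
        have h1 := Nat.le_ceil ε⁻¹
        have : (1 : ℝ) ≤ (r : ℝ) := by exact_mod_cast hr1
        linarith
      have hm0 : (0 : ℝ) < 2 * (r : ℝ) - 1 := by
        have : (1 : ℝ) ≤ (r : ℝ) := by exact_mod_cast hr1
        linarith
      have hinv2 : (2 * (r : ℝ) - 1)⁻¹ ≤ ε := by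
        have h1 : ε * ε⁻¹ = 1 := mul_inv_cancel₀ hε.ne'
        have h2 : (2 * (r : ℝ) - 1) * (2 * (r : ℝ) - 1)⁻¹ = 1 := mul_inv_cancel₀ hm0.ne'
        have h3 : (0:ℝ) ≤ (2 * (r : ℝ) - 1)⁻¹ := by positivity
        nlinarith [h1, h2, h3]
      exact le_trans (hfr r hr1) (by linarith)
    have hcb : Filter.IsCoboundedUnder (· ≤ ·) Filter.atTop f :=
      Filter.isCoboundedUnder_le_of_le Filter.atTop
        (fun r => div_nonneg (Nat.cast_nonneg _) (sq_nonneg _))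
    exact Filter.limsup_le_of_le hcb hev
  by_contra hcon
  push_neg at hcon
  have := key ((upperDensity S - 1 / 2) / 2) (by linarith)
  linarith
end

section
/- Let n be a natural number with n ≤ 8. If S ⊆ ℤ² satisfies N_S(x) ≤ n for every x ∈ S, then the upper density of S is at most 8/(16 − n). -/
open Filter

open scoped Classical

/-- The 8 neighbors of `x` as a finset. -/
noncomputable def nbrFinset (x : ℤ × ℤ) : Finset (ℤ × ℤ) :=
  ((Finset.Icc (x.1 - 1) (x.1 + 1)) ×ˢ (Finset.Icc (x.2 - 1) (x.2 + 1))).erase x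

lemma mem_nbrFinset {x y : ℤ × ℤ} : y ∈ nbrFinset x ↔ IsNbr x y := by
  simp only [nbrFinset, Finset.mem_erase, Finset.mem_product, Finset.mem_Icc, IsNbr]
  constructor
  · rintro ⟨h1, ⟨h2, h3⟩, h4, h5⟩
    exact ⟨h1, by rw [abs_le]; omega, by rw [abs_le]; omega⟩
  · rintro ⟨h1, h2, h3⟩
    rw [abs_le] at h2 h3
    exact ⟨h1, ⟨by omega, by omega⟩, by omega, by omega⟩

lemma card_nbrFinset (x : ℤ × ℤ) : (nbrFinset x).card = 8 := by
  rw [nbrFinset, Finset.card_erase_of_mem (by simp [Finset.mem_product]),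
    Finset.card_product, Int.card_Icc, Int.card_Icc]
  have h1 : x.1 + 1 + 1 - (x.1 - 1) = 3 := by ring
  have h2 : x.2 + 1 + 1 - (x.2 - 1) = 3 := by ring
  rw [h1, h2]
  rfl

lemma isNbr_symm {x y : ℤ × ℤ} (h : IsNbr x y) : IsNbr y x := by
  obtain ⟨h1, h2, h3⟩ := h
  refine ⟨fun e => h1 e.symm, ?_, ?_⟩ <;> rw [abs_sub_comm] <;> assumption

/-- The box as a finset. -/
noncomputable def boxFinset (r : ℕ) : Finset (ℤ × ℤ) :=
  (Finset.Icc (1 - (r : ℤ)) ((r : ℤ) - 1)) ×ˢ (Finset.Icc (1 - (r : ℤ)) ((r : ℤ) - 1))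

lemma mem_boxFinset {r : ℕ} {x : ℤ × ℤ} : x ∈ boxFinset r ↔ x ∈ box r := by
  simp only [boxFinset, Finset.mem_product, Finset.mem_Icc, box, Set.mem_setOf_eq, abs_lt]
  omega

lemma card_boxFinset (r : ℕ) : (boxFinset (r + 1)).card = (2 * r + 1) ^ 2 := by
  rw [boxFinset, Finset.card_product, Int.card_Icc]
  have h1 : (((r + 1 : ℕ) : ℤ) - 1 + 1 - (1 - ((r + 1 : ℕ) : ℤ))).toNat = 2 * r + 1 := by
    push_cast; omega
  rw [h1, sq]

lemma nbrCount_eq (S : Set (ℤ × ℤ)) (x : ℤ × ℤ) :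
    nbrCount S x = ((nbrFinset x).filter (· ∈ S)).card := by
  rw [nbrCount, ← Set.ncard_coe_finset]
  congr 1
  ext y
  simp only [Set.mem_setOf_eq, Finset.coe_filter, mem_nbrFinset]
  tauto

lemma key_count (n : ℕ) (hn : n ≤ 8) (S : Set (ℤ × ℤ))
    (h : ∀ x ∈ S, nbrCount S x ≤ n) (r : ℕ) :
    (16 - n) * ((boxFinset r).filter (· ∈ S)).card ≤ 8 * (2 * r + 1) ^ 2 := by
  set A := (boxFinset r).filter (· ∈ S) with hA
  set T := (boxFinset (r + 1)).filter (· ∉ S) with hT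
  -- double counting
  have hsum : ∑ x ∈ A, (T.filter (fun y => IsNbr x y)).card
      = ∑ y ∈ T, (A.filter (fun x => IsNbr x y)).card := by
    simp only [Finset.card_filter]
    exact Finset.sum_comm
  -- lower bound
  have hlow : (8 - n) * A.card ≤ ∑ x ∈ A, (T.filter (fun y => IsNbr x y)).card := by
    rw [mul_comm, ← smul_eq_mul]
    apply Finset.card_nsmul_le_sum
    intro x hx
    rw [hA, Finset.mem_filter] at hx
    obtain ⟨hxb, hxS⟩ := hx
    have hsub : (nbrFinset x).filter (· ∉ S) ⊆ T.filter (fun y => IsNbr x y) := by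
      intro y hy
      rw [Finset.mem_filter, mem_nbrFinset] at hy
      obtain ⟨hyn, hyS⟩ := hy
      rw [Finset.mem_filter, hT, Finset.mem_filter]
      refine ⟨⟨?_, hyS⟩, hyn⟩
      rw [mem_boxFinset] at hxb ⊢
      obtain ⟨_, h2, h3⟩ := hyn
      simp only [box, Set.mem_setOf_eq, abs_lt] at hxb ⊢
      rw [abs_le] at h2 h3
      push_cast
      omega
    have hcards : ((nbrFinset x).filter (· ∈ S)).card
        + ((nbrFinset x).filter (· ∉ S)).card = 8 := by
      rw [Finset.card_filter_add_card_filter_not, card_nbrFinset]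
    have hnc := h x hxS
    rw [nbrCount_eq] at hnc
    calc 8 - n ≤ ((nbrFinset x).filter (· ∉ S)).card := by omega
    _ ≤ _ := Finset.card_le_card hsub
  -- upper bound
  have hup : ∑ y ∈ T, (A.filter (fun x => IsNbr x y)).card ≤ 8 * T.card := by
    rw [mul_comm]
    apply Finset.sum_le_card_nsmul
    intro y _
    calc (A.filter (fun x => IsNbr x y)).card ≤ (nbrFinset y).card := by
          apply Finset.card_le_card
          intro x hx
          rw [Finset.mem_filter] at hx
          exact mem_nbrFinset.mpr (isNbr_symm hx.2)
    _ = 8 := card_nbrFinset y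
  -- A and T are disjoint subsets of boxFinset (r+1)
  have hAT : A.card + T.card ≤ (2 * r + 1) ^ 2 := by
    rw [← card_boxFinset r, ← Finset.card_union_of_disjoint]
    · apply Finset.card_le_card
      intro x hx
      rw [Finset.mem_union, hA, hT, Finset.mem_filter, Finset.mem_filter] at hx
      rcases hx with ⟨hb, _⟩ | ⟨hb, _⟩
      · rw [mem_boxFinset] at hb ⊢
        simp only [box, Set.mem_setOf_eq] at hb ⊢
        push_cast
        omega
      · exact hb
    · rw [Finset.disjoint_left]
      intro a ha hb
      rw [hA, Finset.mem_filter] at ha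
      rw [hT, Finset.mem_filter] at hb
      exact hb.2 ha.2
  have h1 : (8 - n) * A.card ≤ 8 * T.card := le_trans hlow (hsum ▸ hup)
  have : (16 : ℕ) - n = (8 - n) + 8 := by omega
  rw [this, add_mul]
  calc (8 - n) * A.card + 8 * A.card ≤ 8 * T.card + 8 * A.card := by omega
  _ = 8 * (A.card + T.card) := by ring
  _ ≤ 8 * (2 * r + 1) ^ 2 := Nat.mul_le_mul_left _ hAT

lemma ncard_inter_box (S : Set (ℤ × ℤ)) (r : ℕ) :
    Set.ncard (S ∩ box r) = ((boxFinset r).filter (· ∈ S)).card := by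
  rw [← Set.ncard_coe_finset]
  congr 1
  ext x
  simp only [Set.mem_inter_iff, Finset.coe_filter, Set.mem_setOf_eq, mem_boxFinset]
  tauto

theorem upperDensity_le_of_maxDeg (n : ℕ) (hn : n ≤ 8) (S : Set (ℤ × ℤ))
    (h : ∀ x ∈ S, nbrCount S x ≤ n) :
    upperDensity S ≤ 8 / (16 - (n : ℝ)) := by
  have hpos : (0 : ℝ) < 16 - n := by
    have : (n : ℝ) ≤ 8 := by exact_mod_cast hn
    linarith
  set u := fun r : ℕ => (Set.ncard (S ∩ box r) : ℝ) / (2 * (r : ℝ) - 1) ^ 2 with hu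
  set c := (8 : ℝ) / (16 - (n : ℝ)) with hc
  set v := fun r : ℕ => c * ((2 * (r : ℝ) + 1) / (2 * (r : ℝ) - 1)) ^ 2 with hv
  have hunn : ∀ r, 0 ≤ u r := fun r =>
    div_nonneg (Nat.cast_nonneg _) (sq_nonneg _)
  have hvc : Tendsto v atTop (nhds c) := by
    have h1 : Tendsto (fun r : ℕ => (2 * (r : ℝ) + 1) / (2 * (r : ℝ) - 1)) atTop (nhds 1) := by
      have hb : Tendsto (fun r : ℕ => 2 * (r : ℝ) - 1) atTop atTop := by
        apply Filter.tendsto_atTop_add_const_right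
        exact (tendsto_natCast_atTop_atTop (R := ℝ)).const_mul_atTop two_pos
      have h0 : Tendsto (fun r : ℕ => 2 / (2 * (r : ℝ) - 1)) atTop (nhds 0) :=
        Tendsto.div_atTop tendsto_const_nhds hb
      have heq : ∀ᶠ r : ℕ in atTop, (2 * (r : ℝ) + 1) / (2 * (r : ℝ) - 1)
          = 1 + 2 / (2 * (r : ℝ) - 1) := by
        filter_upwards [eventually_ge_atTop 1] with r hr
        have h1r : (1 : ℝ) ≤ r := by exact_mod_cast hr
        have : (2 * (r : ℝ) - 1) ≠ 0 := by intro e; rw [sub_eq_zero] at e; linarith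
        field_simp
        ring
      rw [tendsto_congr' heq]
      simpa using tendsto_const_nhds.add h0
    have := ((h1.pow 2).const_mul c)
    simpa using this
  have hle : ∀ᶠ r : ℕ in atTop, u r ≤ v r := by
    filter_upwards [eventually_ge_atTop 1] with r hr
    have hr1 : (1 : ℝ) ≤ (r : ℝ) := by exact_mod_cast hr
    have hdpos : (0 : ℝ) < 2 * (r : ℝ) - 1 := by linarith
    have hden : (0 : ℝ) < (2 * (r : ℝ) - 1) ^ 2 := pow_pos hdpos 2
    have hkey := key_count n hn S h r
    have hkeyR : (16 - (n : ℝ)) * (Set.ncard (S ∩ box r) : ℝ) ≤ 8 * (2 * (r : ℝ) + 1) ^ 2 := by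
      rw [ncard_inter_box]
      have := (Nat.cast_le (α := ℝ)).mpr hkey
      push_cast [Nat.cast_sub (by omega : n ≤ 16)] at this
      convert this using 2 <;> push_cast <;> ring
    rw [hu, hv, hc]
    rw [div_le_iff₀ hden]
    have hexp : 8 / (16 - (n : ℝ)) * ((2 * ↑r + 1) / (2 * ↑r - 1)) ^ 2 * (2 * ↑r - 1) ^ 2
        = 8 * (2 * (r : ℝ) + 1) ^ 2 / (16 - (n : ℝ)) := by
      field_simp
    rw [hexp, le_div_iff₀ hpos]
    linarith [hkeyR]
  have hcb : IsCoboundedUnder (· ≤ ·) atTop u :=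
    isCoboundedUnder_le_of_le atTop (x := 0) hunn
  have hbd : IsBoundedUnder (· ≤ ·) atTop v := hvc.isBoundedUnder_le
  calc upperDensity S = limsup u atTop := rfl
  _ ≤ limsup v atTop := limsup_le_limsup hle hcb hbd
  _ = c := hvc.limsup_eq
end

section
/- The maximal density for maximum degree 7 equals 8/9: (a) every S ⊆ ℤ² with N_S(x) ≤ 7 for all x ∈ S has upper density at most 8/9; and (b) the set S₀ = {x ∈ ℤ² : ¬(3 ∣ x₁ and 3 ∣ x₂)} satisfies N_{S₀}(x) ≤ 7 for all x ∈ S₀ and has density exactly 8/9. -/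
open Filter Topology

/-- `S` has density `d`: the sequence `|S ∩ B_r| / (2r-1)²` tends to `d`. -/
def HasDensity (S : Set (ℤ × ℤ)) (d : ℝ) : Prop :=
  Tendsto (fun r : ℕ => (Set.ncard (S ∩ box r) : ℝ) / (2 * (r : ℝ) - 1) ^ 2) atTop (𝓝 d)

noncomputable def nbrF (x : ℤ × ℤ) : Finset (ℤ × ℤ) :=
  ((Finset.Icc (x.1-1) (x.1+1)) ×ˢ (Finset.Icc (x.2-1) (x.2+1))).erase x

lemma mem_nbrF {x y : ℤ × ℤ} : y ∈ nbrF x ↔ IsNbr x y := by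
  obtain ⟨y1, y2⟩ := y; obtain ⟨x1, x2⟩ := x
  simp only [nbrF, IsNbr, Finset.mem_erase, Finset.mem_product, Finset.mem_Icc, ne_eq,
    Prod.mk.injEq, not_and, abs_le]
  omega

lemma card_nbrF (x : ℤ × ℤ) : (nbrF x).card = 8 := by
  rw [nbrF, Finset.card_erase_of_mem (by simp [Finset.mem_product])]
  rw [Finset.card_product]
  simp only [Int.card_Icc, show ∀ a:ℤ, a+1+1-(a-1) = 3 by intro a; ring]
  rfl

noncomputable def blockF (x : ℤ × ℤ) : Finset (ℤ × ℤ) :=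
  (Finset.Icc (x.1-1) (x.1+1)) ×ˢ (Finset.Icc (x.2-1) (x.2+1))

lemma blockF_eq (x : ℤ × ℤ) : blockF x = insert x (nbrF x) := by
  rw [blockF, nbrF, Finset.insert_erase (by simp [Finset.mem_product])]

lemma nbr_subset (S : Set (ℤ × ℤ)) (x : ℤ × ℤ) :
    {y ∈ S | IsNbr x y} ⊆ ↑(nbrF x) := fun y hy => by
  simpa [mem_nbrF] using hy.2

lemma nbr_finite (S : Set (ℤ × ℤ)) (x : ℤ × ℤ) : {y ∈ S | IsNbr x y}.Finite :=
  (nbrF x).finite_toSet.subset (nbr_subset S x)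

lemma block_le_eight {S : Set (ℤ × ℤ)} (hS : ∀ x ∈ S, nbrCount S x ≤ 7) (c : ℤ × ℤ) :
    (S ∩ ↑(blockF c)).ncard ≤ 8 := by
  by_cases hc : c ∈ S
  · have hsub : S ∩ ↑(blockF c) ⊆ insert c {y ∈ S | IsNbr c y} := by
      rintro y ⟨hyS, hyB⟩
      rw [blockF_eq] at hyB
      rcases Finset.mem_insert.1 hyB with h | h
      · exact Or.inl h
      · exact Or.inr ⟨hyS, mem_nbrF.1 h⟩
    calc (S ∩ ↑(blockF c)).ncard ≤ (insert c {y ∈ S | IsNbr c y}).ncard :=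
          Set.ncard_le_ncard hsub ((nbr_finite S c).insert c)
      _ ≤ {y ∈ S | IsNbr c y}.ncard + 1 := Set.ncard_insert_le _ _
      _ ≤ 8 := by have := hS c hc; rw [nbrCount] at this; omega
  · have hsub : S ∩ ↑(blockF c) ⊆ ↑(nbrF c) := by
      rintro y ⟨hyS, hyB⟩
      rw [blockF_eq] at hyB
      rcases Finset.mem_insert.1 hyB with h | h
      · exact absurd (h ▸ hyS) hc
      · exact h
    calc (S ∩ ↑(blockF c)).ncard ≤ (nbrF c : Set (ℤ × ℤ)).ncard :=
          Set.ncard_le_ncard hsub (nbrF c).finite_toSet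
      _ = 8 := by rw [Set.ncard_coe_finset, card_nbrF]

noncomputable def boxF (r : ℕ) : Finset (ℤ × ℤ) :=
  Finset.Icc (-(r:ℤ)+1) ((r:ℤ)-1) ×ˢ Finset.Icc (-(r:ℤ)+1) ((r:ℤ)-1)

lemma coe_boxF (r : ℕ) : ↑(boxF r) = box r := by
  ext ⟨x1, x2⟩
  simp only [boxF, box, Finset.coe_product, Set.mem_prod, Finset.coe_Icc, Set.mem_Icc,
    Set.mem_setOf_eq, abs_lt]
  omega

lemma card_boxF {r : ℕ} (hr : 1 ≤ r) : (boxF r).card = (2*r-1)^2 := by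
  rw [boxF, Finset.card_product, Int.card_Icc]
  have : ((r:ℤ) - 1 + 1 - (-(r:ℤ)+1)).toNat = 2*r-1 := by omega
  rw [this]; ring

lemma count_bound {S : Set (ℤ × ℤ)} (hS : ∀ x ∈ S, nbrCount S x ≤ 7) (r : ℕ) :
    (S ∩ box r).ncard ≤ 8 * (2*((r+2)/3)+1)^2 := by
  have hboxfin : (box r).Finite := coe_boxF r ▸ (boxF r).finite_toSet
  have hfin : (S ∩ box r).Finite := hboxfin.inter_of_right S
  set m : ℕ := (r+2)/3 with hm
  set t : Finset (ℤ × ℤ) := Finset.Icc (-(m:ℤ)) m ×ˢ Finset.Icc (-(m:ℤ)) m with ht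
  set f : ℤ × ℤ → ℤ × ℤ := fun x =>
    (((x.1+1) - (x.1+1)%3)/3, ((x.2+1) - (x.2+1)%3)/3) with hf
  set A : Finset (ℤ × ℤ) := hfin.toFinset with hA
  have hmem : ∀ x ∈ A, f x ∈ t := by
    intro x hx
    rw [hA, Set.Finite.mem_toFinset] at hx
    obtain ⟨-, hx1, hx2⟩ := hx
    rw [abs_lt] at hx1 hx2
    rw [ht, Finset.mem_product, Finset.mem_Icc, Finset.mem_Icc]
    constructor <;> constructor <;> simp only [hf] <;> omega
  have hcard : A.card = ∑ p ∈ t, (A.filter fun x => f x = p).card :=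
    Finset.card_eq_sum_card_fiberwise hmem
  have hfiber : ∀ p ∈ t, (A.filter fun x => f x = p).card ≤ 8 := by
    intro p _
    have hsub : ↑(A.filter fun x => f x = p) ⊆ S ∩ ↑(blockF (3*p.1, 3*p.2)) := by
      intro x hx
      simp only [Finset.coe_filter, Set.mem_setOf_eq, hA, Set.Finite.mem_toFinset] at hx
      obtain ⟨⟨hxS, -⟩, hfx⟩ := hx
      refine ⟨hxS, ?_⟩
      simp only [blockF, Finset.coe_product, Set.mem_prod, Finset.coe_Icc, Set.mem_Icc]
      have h1 : p.1 = ((x.1+1) - (x.1+1)%3)/3 := by rw [← hfx]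
      have h2 : p.2 = ((x.2+1) - (x.2+1)%3)/3 := by rw [← hfx]
      constructor <;> constructor <;> omega
    calc (A.filter fun x => f x = p).card
        = (↑(A.filter fun x => f x = p) : Set (ℤ × ℤ)).ncard := (Set.ncard_coe_finset _).symm
      _ ≤ (S ∩ ↑(blockF (3*p.1, 3*p.2))).ncard :=
          Set.ncard_le_ncard hsub ((blockF _).finite_toSet.subset Set.inter_subset_right)
      _ ≤ 8 := block_le_eight hS _
  have htcard : t.card = (2*m+1)^2 := by
    rw [ht, Finset.card_product, Int.card_Icc]
    have : ((m:ℤ) + 1 - (-(m:ℤ))).toNat = 2*m+1 := by omega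
    rw [this]; ring
  calc (S ∩ box r).ncard = A.card := by rw [hA, Set.ncard_eq_toFinset_card _ hfin]
    _ = ∑ p ∈ t, (A.filter fun x => f x = p).card := hcard
    _ ≤ ∑ _p ∈ t, 8 := Finset.sum_le_sum hfiber
    _ = 8 * (2*m+1)^2 := by rw [Finset.sum_const, htcard, smul_eq_mul, mul_comm]

lemma aux_atTop : Tendsto (fun r : ℕ => 2*(r:ℝ)-1) atTop atTop := by
  simp only [sub_eq_add_neg]
  exact tendsto_atTop_add_const_right _ _ (tendsto_natCast_atTop_atTop.const_mul_atTop two_pos)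

lemma inv_lim : Tendsto (fun r : ℕ => (2*(r:ℝ)-1)⁻¹) atTop (𝓝 0) :=
  aux_atTop.inv_tendsto_atTop

lemma partA {S : Set (ℤ × ℤ)} (hS : ∀ x ∈ S, nbrCount S x ≤ 7) : upperDensity S ≤ 8/9 := by
  set f : ℕ → ℝ := fun r => (Set.ncard (S ∩ box r) : ℝ) / (2 * (r : ℝ) - 1) ^ 2 with hfdef
  set g : ℕ → ℝ := fun r => 8/9 * (1 + 8*(2*(r:ℝ)-1)⁻¹)^2 with hgdef
  have hfg : ∀ᶠ r in atTop, f r ≤ g r := by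
    filter_upwards [eventually_ge_atTop 1] with r hr
    have hr1 : (1:ℝ) ≤ (r:ℝ) := by exact_mod_cast hr
    have hpos : (0:ℝ) < 2*(r:ℝ)-1 := by linarith
    have hne : (2*(r:ℝ)-1) ≠ 0 := ne_of_gt hpos
    have hcb := count_bound hS r
    set m : ℕ := (r+2)/3 with hm
    have hnat : 3*(2*m+1) ≤ 2*r+7 := by omega
    have hmr : (2*(m:ℝ)+1) ≤ (2*(r:ℝ)+7)/3 := by
      rw [le_div_iff₀ (by norm_num : (0:ℝ) < 3)]
      have : ((3*(2*m+1) : ℕ) : ℝ) ≤ ((2*r+7 : ℕ) : ℝ) := by exact_mod_cast hnat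
      push_cast at this
      linarith
    have key : (Set.ncard (S ∩ box r) : ℝ) ≤ 8*((2*(r:ℝ)+7)/3)^2 := by
      have h1 : (Set.ncard (S ∩ box r) : ℝ) ≤ ((8 * (2*m+1)^2 : ℕ) : ℝ) := by
        exact_mod_cast hcb
      refine h1.trans ?_
      push_cast
      have h2 : (0:ℝ) ≤ 2*(m:ℝ)+1 := by positivity
      nlinarith [pow_le_pow_left₀ h2 hmr 2]
    have : f r ≤ 8*((2*(r:ℝ)+7)/3)^2 / (2*(r:ℝ)-1)^2 := by
      simp only [hfdef]
      gcongr
    refine this.trans_eq ?_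
    rw [hgdef]
    field_simp
    ring
  have hg : Tendsto g atTop (𝓝 (8/9)) := by
    have h1 : Tendsto g atTop (𝓝 (8/9 * (1 + 8*0)^2)) :=
      (((inv_lim.const_mul 8).const_add 1).pow 2).const_mul (8/9)
    norm_num at h1
    exact h1
  have hcob : IsCoboundedUnder (· ≤ ·) atTop f :=
    isCoboundedUnder_le_of_eventually_le atTop (x := 0)
      (Eventually.of_forall fun r => div_nonneg (Nat.cast_nonneg _) (sq_nonneg _))
  have hbd : IsBoundedUnder (· ≤ ·) atTop g := hg.isBoundedUnder_le
  exact (limsup_le_limsup hfg hcob hbd).trans_eq hg.limsup_eq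

def S0 : Set (ℤ × ℤ) := {x : ℤ × ℤ | ¬ (3 ∣ x.1 ∧ 3 ∣ x.2)}

lemma partB_deg : ∀ x ∈ S0, nbrCount S0 x ≤ 7 := by
  intro x hx
  set y₀ : ℤ × ℤ := ((x.1+1)-(x.1+1)%3, (x.2+1)-(x.2+1)%3) with hy₀
  have hdvd1 : (3:ℤ) ∣ y₀.1 := by simp only [hy₀]; omega
  have hdvd2 : (3:ℤ) ∣ y₀.2 := by simp only [hy₀]; omega
  have hxS : ¬ (3 ∣ x.1 ∧ 3 ∣ x.2) := hx
  have hne : y₀ ≠ x := by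
    intro h
    exact hxS ⟨h ▸ hdvd1, h ▸ hdvd2⟩
  have hnbr : IsNbr x y₀ := by
    refine ⟨hne, ?_, ?_⟩ <;> simp only [hy₀] <;> rw [abs_le] <;> omega
  have hy₀mem : y₀ ∈ nbrF x := mem_nbrF.2 hnbr
  have hsub : {y ∈ S0 | IsNbr x y} ⊆ ↑((nbrF x).erase y₀) := by
    rintro y ⟨hyS, hyN⟩
    simp only [Finset.coe_erase, Set.mem_diff, Set.mem_singleton_iff]
    refine ⟨mem_nbrF.2 hyN, fun h => ?_⟩
    exact hyS (h ▸ ⟨hdvd1, hdvd2⟩)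
  calc nbrCount S0 x ≤ ((nbrF x).erase y₀ : Set (ℤ × ℤ)).ncard :=
        Set.ncard_le_ncard hsub (Finset.finite_toSet _)
    _ = 7 := by rw [Set.ncard_coe_finset, Finset.card_erase_of_mem hy₀mem, card_nbrF]

noncomputable def DF (r : ℕ) : Finset (ℤ × ℤ) :=
  ((Finset.Icc (-(((r-1)/3 : ℕ):ℤ)) (((r-1)/3 : ℕ):ℤ)) ×ˢ
   (Finset.Icc (-(((r-1)/3 : ℕ):ℤ)) (((r-1)/3 : ℕ):ℤ))).image (fun p => (3*p.1, 3*p.2))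

lemma coe_DF {r : ℕ} (hr : 1 ≤ r) : ↑(DF r) = {x : ℤ × ℤ | 3 ∣ x.1 ∧ 3 ∣ x.2} ∩ box r := by
  ext ⟨a, b⟩
  simp only [DF, Finset.coe_image, Set.mem_image, Finset.mem_coe, Finset.mem_product,
    Finset.mem_Icc, box, Set.mem_inter_iff, Set.mem_setOf_eq, abs_lt, Prod.ext_iff]
  constructor
  · rintro ⟨⟨p1, p2⟩, ⟨⟨h1, h2⟩, h3, h4⟩, h5, h6⟩
    simp only at h5 h6
    have h1' : -(((r-1)/3 : ℕ):ℤ) ≤ p1 := h1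
    have h2' : p1 ≤ (((r-1)/3 : ℕ):ℤ) := h2
    have h3' : -(((r-1)/3 : ℕ):ℤ) ≤ p2 := h3
    have h4' : p2 ≤ (((r-1)/3 : ℕ):ℤ) := h4
    exact ⟨⟨Dvd.intro p1 h5, Dvd.intro p2 h6⟩, by omega, by omega⟩
  · rintro ⟨⟨⟨k, hk⟩, ⟨l, hl⟩⟩, ha, hb⟩
    exact ⟨(k, l), ⟨by constructor <;> omega, by constructor <;> omega⟩, by omega, by omega⟩

lemma card_DF (r : ℕ) : (DF r).card = (2*((r-1)/3)+1)^2 := by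
  rw [DF, Finset.card_image_of_injective _
    (fun p q h => by rw [Prod.ext_iff] at h ⊢; constructor <;> omega)]
  rw [Finset.card_product, Int.card_Icc]
  have : ((((r-1)/3 : ℕ):ℤ) + 1 - (-(((r-1)/3 : ℕ):ℤ))).toNat = 2*((r-1)/3)+1 := by omega
  rw [this]; ring

lemma S0_count {r : ℕ} (hr : 1 ≤ r) :
    (S0 ∩ box r).ncard = (2*r-1)^2 - (2*((r-1)/3)+1)^2 := by
  have hboxfin : (box r).Finite := coe_boxF r ▸ (boxF r).finite_toSet
  have hsplit : S0 ∩ box r = box r \ ({x : ℤ × ℤ | 3 ∣ x.1 ∧ 3 ∣ x.2} ∩ box r) := by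
    ext x
    simp only [S0, Set.mem_inter_iff, Set.mem_setOf_eq, Set.mem_diff]
    tauto
  have hDsub : {x : ℤ × ℤ | 3 ∣ x.1 ∧ 3 ∣ x.2} ∩ box r ⊆ box r := Set.inter_subset_right
  rw [hsplit, Set.ncard_diff hDsub (hboxfin.inter_of_right _)]
  rw [← coe_DF hr, Set.ncard_coe_finset, card_DF]
  congr 1
  rw [← coe_boxF, Set.ncard_coe_finset, card_boxF hr]

lemma h_lim : Tendsto (fun r : ℕ => (2*((((r-1)/3 : ℕ)):ℝ)+1)/(2*(r:ℝ)-1)) atTop (𝓝 (1/3)) := by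
  have hlo : Tendsto (fun r : ℕ => 1/3 - (2/3)*(2*(r:ℝ)-1)⁻¹) atTop (𝓝 (1/3)) := by
    have := (inv_lim.const_mul (2/3)).const_sub (1/3)
    simpa using this
  have hhi : Tendsto (fun r : ℕ => 1/3 + (2/3)*(2*(r:ℝ)-1)⁻¹) atTop (𝓝 (1/3)) := by
    have := (inv_lim.const_mul (2/3)).const_add (1/3)
    simpa using this
  refine tendsto_of_tendsto_of_tendsto_of_le_of_le' hlo hhi ?_ ?_
  · filter_upwards [eventually_ge_atTop 1] with r hr
    set M : ℕ := (r-1)/3 with hMdef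
    have hA : 3*M+1 ≤ r := by omega
    have hB : r ≤ 3*M+3 := by omega
    have hAr : 3*(M:ℝ)+1 ≤ (r:ℝ) := by exact_mod_cast hA
    have hBr : (r:ℝ) ≤ 3*(M:ℝ)+3 := by exact_mod_cast hB
    have hr1 : (1:ℝ) ≤ (r:ℝ) := by exact_mod_cast hr
    have hpos : (0:ℝ) < 2*(r:ℝ)-1 := by linarith
    have heq : 1/3 - (2/3)*(2*(r:ℝ)-1)⁻¹ = (2*(r:ℝ)-3)/(3*(2*(r:ℝ)-1)) := by
      field_simp; ring
    rw [heq, div_le_div_iff₀ (by linarith) hpos]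
    nlinarith
  · filter_upwards [eventually_ge_atTop 1] with r hr
    set M : ℕ := (r-1)/3 with hMdef
    have hA : 3*M+1 ≤ r := by omega
    have hAr : 3*(M:ℝ)+1 ≤ (r:ℝ) := by exact_mod_cast hA
    have hr1 : (1:ℝ) ≤ (r:ℝ) := by exact_mod_cast hr
    have hpos : (0:ℝ) < 2*(r:ℝ)-1 := by linarith
    have heq : 1/3 + (2/3)*(2*(r:ℝ)-1)⁻¹ = (2*(r:ℝ)+1)/(3*(2*(r:ℝ)-1)) := by
      field_simp; ring
    rw [heq, div_le_div_iff₀ hpos (by linarith)]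
    nlinarith

lemma partB_density : HasDensity S0 (8/9) := by
  rw [HasDensity, show (8:ℝ)/9 = 1 - (1/3)^2 by norm_num]
  refine Tendsto.congr' ?_ (tendsto_const_nhds.sub (h_lim.pow 2))
  filter_upwards [eventually_ge_atTop 1] with r hr
  set M : ℕ := (r-1)/3 with hMdef
  have hle : (2*M+1)^2 ≤ (2*r-1)^2 := Nat.pow_le_pow_left (by omega) 2
  have hr1 : (1:ℝ) ≤ (r:ℝ) := by exact_mod_cast hr
  have hX : (2*(r:ℝ)-1) ≠ 0 := ne_of_gt (by linarith)
  have e1 : ((2*r-1:ℕ):ℝ) = 2*(r:ℝ)-1 := by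
    rw [Nat.cast_sub (by omega)]; push_cast; ring
  rw [S0_count hr, Nat.cast_sub hle]
  push_cast [e1]
  field_simp

theorem maxDensity_degree_seven :
    (∀ S : Set (ℤ × ℤ), (∀ x ∈ S, nbrCount S x ≤ 7) → upperDensity S ≤ 8 / 9) ∧
    ((∀ x ∈ {x : ℤ × ℤ | ¬ (3 ∣ x.1 ∧ 3 ∣ x.2)},
        nbrCount {x : ℤ × ℤ | ¬ (3 ∣ x.1 ∧ 3 ∣ x.2)} x ≤ 7) ∧
      HasDensity {x : ℤ × ℤ | ¬ (3 ∣ x.1 ∧ 3 ∣ x.2)} (8 / 9)) := by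
  exact ⟨fun S hS => partA hS, partB_deg, partB_density⟩
end

section
/- Let n be a natural number with n ≤ 3. If S ⊆ ℤ² satisfies N_S(x) ≤ n for every x ∈ S, then the upper density of S is at most 1/(4 − n). In particular, for n = 0, 1, 2 the maximal density of a set of maximum degree at most n is exactly 1/(4 − n), these values being attained respectively by {x : 2 ∣ x₁ and 2 ∣ x₂}, by {x : x₁ ≡ ±1 (mod 3) and 2 ∣ x₂}, and by {x : 2 ∣ x₁}. -/
open Filter Topology

/-! ### Auxiliary decidability -/

instance (x y : ℤ × ℤ) : Decidable (IsNbr x y) := by unfold IsNbr; infer_instance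

/-! ### The unit cells (Voronoi) counting argument -/

/-- The four corners of the unit cell with lower-left corner `c`. -/
def corners (c : ℤ × ℤ) : Finset (ℤ × ℤ) := {c, (c.1 + 1, c.2), (c.1, c.2 + 1), (c.1 + 1, c.2 + 1)}

lemma mem_corners {x c : ℤ × ℤ} :
    x ∈ corners c ↔ (x.1 = c.1 ∨ x.1 = c.1 + 1) ∧ (x.2 = c.2 ∨ x.2 = c.2 + 1) := by
  simp [corners, Prod.ext_iff]; omega

lemma nbr_of_corners {x y c : ℤ × ℤ} (hx : x ∈ corners c) (hy : y ∈ corners c)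
    (hxy : y ≠ x) : IsNbr x y := by
  rw [mem_corners] at hx hy
  refine ⟨hxy, ?_, ?_⟩ <;> rw [abs_le] <;> omega

/-- Two distinct points lie in the corner sets of at most two common cells. -/
lemma pair_cells {x y : ℤ × ℤ} (hxy : x ≠ y) (C : Finset (ℤ × ℤ)) :
    (C.filter (fun c => x ∈ corners c ∧ y ∈ corners c)).card ≤ 2 := by
  have hxy' : x.1 ≠ y.1 ∨ x.2 ≠ y.2 := by
    by_contra h; push_neg at h; exact hxy (Prod.ext h.1 h.2)
  rcases hxy' with h | h
  · have hsub : (C.filter (fun c => x ∈ corners c ∧ y ∈ corners c)) ⊆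
        {(min x.1 y.1, x.2 - 1), (min x.1 y.1, x.2)} := by
      intro c hc
      simp only [Finset.mem_filter, mem_corners] at hc
      simp only [Finset.mem_insert, Finset.mem_singleton, Prod.ext_iff]
      omega
    calc (C.filter (fun c => x ∈ corners c ∧ y ∈ corners c)).card
        ≤ ({(min x.1 y.1, x.2 - 1), (min x.1 y.1, x.2)} : Finset (ℤ × ℤ)).card :=
          Finset.card_le_card hsub
      _ ≤ 2 := (Finset.card_insert_le _ _).trans (by simp)
  · have hsub : (C.filter (fun c => x ∈ corners c ∧ y ∈ corners c)) ⊆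
        {(x.1 - 1, min x.2 y.2), (x.1, min x.2 y.2)} := by
      intro c hc
      simp only [Finset.mem_filter, mem_corners] at hc
      simp only [Finset.mem_insert, Finset.mem_singleton, Prod.ext_iff]
      omega
    calc (C.filter (fun c => x ∈ corners c ∧ y ∈ corners c)).card
        ≤ ({(x.1 - 1, min x.2 y.2), (x.1, min x.2 y.2)} : Finset (ℤ × ℤ)).card :=
          Finset.card_le_card hsub
      _ ≤ 2 := (Finset.card_insert_le _ _).trans (by simp)

lemma box_finite (r : ℕ) : (box r).Finite := by
  apply Set.Finite.subset (Set.finite_Icc ((-(r : ℤ), -(r : ℤ))) (((r : ℤ), (r : ℤ))))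
  intro x hx
  obtain ⟨h1, h2⟩ := hx
  rw [abs_lt] at h1 h2
  simp only [Set.mem_Icc, Prod.le_def]
  omega

/-- The main counting estimate: `8·|S ∩ B_r| ≤ 8r² + 2n·|S ∩ B_r|`. -/
lemma count_key {n : ℕ} {S : Set (ℤ × ℤ)} (hS : ∀ x ∈ S, nbrCount S x ≤ n) (r : ℕ) :
    8 * (S ∩ box r).ncard ≤ 8 * r ^ 2 + 2 * n * (S ∩ box r).ncard := by
  classical
  have hfin : (S ∩ box r).Finite := Set.Finite.subset (box_finite r) Set.inter_subset_right
  set T : Finset (ℤ × ℤ) := hfin.toFinset with hTdef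
  have hT : (S ∩ box r).ncard = T.card := Set.ncard_eq_toFinset_card _ hfin
  have hmemT : ∀ x ∈ T, x ∈ S ∧ |x.1| < (r : ℤ) ∧ |x.2| < (r : ℤ) := by
    intro x hx
    rw [hTdef, Set.Finite.mem_toFinset] at hx
    exact ⟨hx.1, hx.2⟩
  set C : Finset (ℤ × ℤ) := Finset.Icc (-(r : ℤ), -(r : ℤ)) ((r : ℤ) - 1, (r : ℤ) - 1) with hCdef
  have hCcard : C.card = 4 * r ^ 2 := by
    rw [hCdef, Finset.card_Icc_prod]
    simp only [Int.card_Icc]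
    have : ((r : ℤ) - 1 + 1 - -(r : ℤ)).toNat = 2 * r := by omega
    rw [this]; ring
  set F : ℤ × ℤ → Finset (ℤ × ℤ) := fun c => T.filter (fun x => x ∈ corners c) with hFdef
  -- key1 : total incidences
  have key1 : ∑ c ∈ C, (F c).card = 4 * T.card := by
    have e1 : ∑ c ∈ C, (F c).card = ∑ x ∈ T, (C.filter (fun c => x ∈ corners c)).card := by
      simp only [hFdef, Finset.card_filter]
      exact Finset.sum_comm
    rw [e1]
    rw [Finset.sum_congr rfl (fun x hx => ?_), Finset.sum_const, smul_eq_mul, mul_comm]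
    have hx' := hmemT x hx
    simp only [abs_lt] at hx'
    have hfe : C.filter (fun c => x ∈ corners c) =
        {(x.1 - 1, x.2 - 1), (x.1, x.2 - 1), (x.1 - 1, x.2), (x.1, x.2)} := by
      ext c
      simp only [Finset.mem_filter, mem_corners, hCdef, Finset.mem_Icc, Prod.le_def,
        Finset.mem_insert, Finset.mem_singleton, Prod.ext_iff]
      omega
    rw [hfe]
    rw [Finset.card_insert_of_notMem (by simp only [Finset.mem_insert, Finset.mem_singleton, Prod.ext_iff]; omega),
      Finset.card_insert_of_notMem (by simp only [Finset.mem_insert, Finset.mem_singleton, Prod.ext_iff]; omega),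
      Finset.card_insert_of_notMem (by simp only [Finset.mem_insert, Finset.mem_singleton, Prod.ext_iff]; omega),
      Finset.card_singleton]
  -- degree bound within T
  have hdeg : ∀ x ∈ T, (T.filter (fun y => IsNbr x y)).card ≤ n := by
    intro x hx
    have hxS := (hmemT x hx).1
    have hNfin : {y ∈ S | IsNbr x y}.Finite := by
      apply Set.Finite.subset (Set.finite_Icc (x.1 - 1, x.2 - 1) (x.1 + 1, x.2 + 1))
      rintro y ⟨-, -, h1, h2⟩
      rw [abs_le] at h1 h2
      simp only [Set.mem_Icc, Prod.le_def]
      omega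
    have hsub : ↑(T.filter (fun y => IsNbr x y)) ⊆ {y ∈ S | IsNbr x y} := by
      intro y hy
      simp only [Finset.coe_filter, Set.mem_setOf_eq] at hy
      exact ⟨(hmemT y hy.1).1, hy.2⟩
    calc (T.filter (fun y => IsNbr x y)).card
        = (↑(T.filter (fun y => IsNbr x y)) : Set (ℤ × ℤ)).ncard := (Set.ncard_coe_finset _).symm
      _ ≤ {y ∈ S | IsNbr x y}.ncard := Set.ncard_le_ncard hsub hNfin
      _ ≤ n := hS x hxS
  -- key2 : pair incidences
  have key2 : ∑ c ∈ C, ((F c).card * (F c).card - (F c).card) ≤ 2 * n * T.card := by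
    have h1 : ∀ c, (F c).card * (F c).card - (F c).card = (F c).offDiag.card :=
      fun c => (Finset.offDiag_card _).symm
    simp only [h1]
    have h2 : ∀ c, (F c).offDiag =
        (T.offDiag).filter (fun p => p.1 ∈ corners c ∧ p.2 ∈ corners c) := by
      intro c
      ext p
      simp only [Finset.mem_offDiag, Finset.mem_filter, hFdef]
      tauto
    simp only [h2]
    have e1 : ∑ c ∈ C, ((T.offDiag).filter (fun p => p.1 ∈ corners c ∧ p.2 ∈ corners c)).card
        = ∑ p ∈ T.offDiag, (C.filter (fun c => p.1 ∈ corners c ∧ p.2 ∈ corners c)).card := by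
      simp only [Finset.card_filter]
      exact Finset.sum_comm
    rw [e1]
    calc ∑ p ∈ T.offDiag, (C.filter (fun c => p.1 ∈ corners c ∧ p.2 ∈ corners c)).card
        ≤ ∑ p ∈ T.offDiag, (if IsNbr p.1 p.2 then 2 else 0) := by
          apply Finset.sum_le_sum
          intro p hp
          rw [Finset.mem_offDiag] at hp
          by_cases hnbr : IsNbr p.1 p.2
          · simp only [hnbr, if_true]
            exact pair_cells hp.2.2 C
          · simp only [hnbr, if_false, Nat.le_zero, Finset.card_eq_zero,
              Finset.filter_eq_empty_iff]
            intro c _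
            rintro ⟨hc1, hc2⟩
            exact hnbr (nbr_of_corners hc1 hc2 (Ne.symm hp.2.2))
      _ ≤ ∑ p ∈ T ×ˢ T, (if IsNbr p.1 p.2 then 2 else 0) := by
          apply Finset.sum_le_sum_of_subset_of_nonneg
          · intro p hp
            rw [Finset.mem_offDiag] at hp
            exact Finset.mem_product.mpr ⟨hp.1, hp.2.1⟩
          · intros; positivity
      _ = ∑ x ∈ T, ∑ y ∈ T, (if IsNbr x y then 2 else 0) := Finset.sum_product _ _ _
      _ = ∑ x ∈ T, 2 * (T.filter (fun y => IsNbr x y)).card := by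
          apply Finset.sum_congr rfl
          intro x _
          rw [Finset.card_filter, Finset.mul_sum]
          apply Finset.sum_congr rfl
          intro y _
          split <;> simp
      _ ≤ ∑ _x ∈ T, 2 * n := Finset.sum_le_sum (fun x hx => Nat.mul_le_mul_left 2 (hdeg x hx))
      _ = 2 * n * T.card := by rw [Finset.sum_const, smul_eq_mul, mul_comm]
  -- pointwise inequality 2k ≤ 2 + (k*k - k)
  have key3 : ∀ k : ℕ, 2 * k ≤ 2 + (k * k - k) := by
    intro k
    rcases Nat.lt_or_ge k 3 with h | h
    · interval_cases k <;> simp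
    · have h2 : 3 * k ≤ k * k := Nat.mul_le_mul_right k h
      omega
  have main : 2 * ∑ c ∈ C, (F c).card ≤
      2 * C.card + ∑ c ∈ C, ((F c).card * (F c).card - (F c).card) := by
    rw [Finset.mul_sum]
    calc ∑ c ∈ C, 2 * (F c).card ≤ ∑ c ∈ C, (2 + ((F c).card * (F c).card - (F c).card)) :=
          Finset.sum_le_sum (fun c _ => key3 _)
      _ = 2 * C.card + ∑ c ∈ C, ((F c).card * (F c).card - (F c).card) := by
          rw [Finset.sum_add_distrib, Finset.sum_const, smul_eq_mul, mul_comm]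
  rw [hT]
  rw [key1, hCcard] at main
  omega

/-! ### The basic limit -/

lemma lim_aux (a b c : ℝ) :
    Tendsto (fun r : ℕ => (a * (r : ℝ) ^ 2 + b * r + c) / (2 * (r : ℝ) - 1) ^ 2) atTop
      (𝓝 (a / 4)) := by
  have h1 : Tendsto (fun r : ℕ => ((r : ℝ))⁻¹) atTop (𝓝 0) :=
    tendsto_inv_atTop_zero.comp tendsto_natCast_atTop_atTop
  have hnum : Tendsto (fun r : ℕ => a + b * ((r : ℝ))⁻¹ + c * (((r : ℝ))⁻¹) ^ 2) atTop (𝓝 a) := by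
    have := ((tendsto_const_nhds (x := a)).add ((tendsto_const_nhds (x := b)).mul h1)).add
      ((tendsto_const_nhds (x := c)).mul (h1.pow 2))
    simpa using this
  have hden : Tendsto (fun r : ℕ => (2 - ((r : ℝ))⁻¹) ^ 2) atTop (𝓝 4) := by
    have := ((tendsto_const_nhds (x := (2 : ℝ))).sub h1).pow 2
    norm_num at this
    exact this
  have hdiv := hnum.div hden (by norm_num)
  apply hdiv.congr'
  filter_upwards [eventually_ge_atTop 1] with r hr
  have hr0 : (r : ℝ) ≠ 0 := by positivity
  have hr2 : 2 * (r : ℝ) - 1 ≠ 0 := by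
    have : (1 : ℝ) ≤ (r : ℝ) := by exact_mod_cast hr
    nlinarith
  rw [Pi.div_apply]
  field_simp

/-! ### Part 1: the density upper bound -/

lemma part1 (n : ℕ) (hn : n ≤ 3) (S : Set (ℤ × ℤ)) (hS : ∀ x ∈ S, nbrCount S x ≤ n) :
    upperDensity S ≤ 1 / (4 - (n : ℝ)) := by
  have h4n : (0 : ℝ) < 4 - n := by
    have : (n : ℝ) ≤ 3 := by exact_mod_cast hn
    linarith
  have hg : Tendsto (fun r : ℕ =>
      ((4 / (4 - (n : ℝ))) * (r : ℝ) ^ 2 + 0 * (r : ℝ) + 0) / (2 * (r : ℝ) - 1) ^ 2) atTop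
      (𝓝 ((4 / (4 - (n : ℝ))) / 4)) := lim_aux _ _ _
  have hfg : (fun r : ℕ => ((S ∩ box r).ncard : ℝ) / (2 * (r : ℝ) - 1) ^ 2) ≤ᶠ[atTop]
      (fun r : ℕ =>
        ((4 / (4 - (n : ℝ))) * (r : ℝ) ^ 2 + 0 * (r : ℝ) + 0) / (2 * (r : ℝ) - 1) ^ 2) := by
    filter_upwards [] with r
    have hk := count_key hS r
    have hkR : 8 * ((S ∩ box r).ncard : ℝ) ≤ 8 * (r : ℝ) ^ 2 + 2 * n * ((S ∩ box r).ncard : ℝ) := by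
      exact_mod_cast hk
    have h2 : ((S ∩ box r).ncard : ℝ) ≤ 4 / (4 - n) * (r : ℝ) ^ 2 := by
      rw [div_mul_eq_mul_div, le_div_iff₀ h4n]
      linarith
    gcongr
    linarith
  have hco : IsCoboundedUnder (· ≤ ·) atTop
      (fun r : ℕ => ((S ∩ box r).ncard : ℝ) / (2 * (r : ℝ) - 1) ^ 2) := by
    apply Filter.isCoboundedUnder_le_of_eventually_le atTop (x := 0)
    filter_upwards [] with r
    positivity
  have hlim := Filter.limsup_le_limsup hfg hco hg.isBoundedUnder_le
  rw [hg.limsup_eq] at hlim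
  refine le_trans hlim ?_
  rw [div_div]
  rw [show ((4 : ℝ) - n) * 4 = 4 * (4 - n) by ring]
  rw [← div_div]
  norm_num

/-! ### Density computations for the examples -/

lemma hasDensity_aux (S : Set (ℤ × ℤ)) (a b c b' c' d : ℝ) (hd : a = 4 * d)
    (h : ∀ᶠ r : ℕ in atTop,
      a * (r : ℝ) ^ 2 + b * r + c ≤ ((S ∩ box r).ncard : ℝ) ∧
      ((S ∩ box r).ncard : ℝ) ≤ a * (r : ℝ) ^ 2 + b' * r + c') :
    HasDensity S d := by
  have hlo := lim_aux a b c
  have hhi := lim_aux a b' c'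
  have hd4 : a / 4 = d := by rw [hd]; ring
  rw [hd4] at hlo hhi
  apply tendsto_of_tendsto_of_tendsto_of_le_of_le' hlo hhi
  · filter_upwards [h] with r hr
    gcongr
    exact hr.1
  · filter_upwards [h] with r hr
    gcongr
    exact hr.2

lemma even_card (m : ℤ) :
    ((Finset.Icc (-m) m).filter (fun a => 2 ∣ a)).card = (2 * (m / 2) + 1).toNat := by
  have himg : (Finset.Icc (-m) m).filter (fun a => 2 ∣ a) =
      (Finset.Icc (-(m / 2)) (m / 2)).image (fun k => 2 * k) := by
    ext a
    simp only [Finset.mem_filter, Finset.mem_Icc, Finset.mem_image]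
    constructor
    · rintro ⟨⟨h1, h2⟩, k, rfl⟩
      exact ⟨k, ⟨by omega, by omega⟩, rfl⟩
    · rintro ⟨k, ⟨h1, h2⟩, rfl⟩
      exact ⟨⟨by omega, by omega⟩, ⟨k, rfl⟩⟩
  rw [himg, Finset.card_image_of_injective _ (fun a b h => by omega), Int.card_Icc]
  congr 1
  ring

lemma three_card (m : ℤ) :
    ((Finset.Icc (-m) m).filter (fun a => 3 ∣ a)).card = (2 * (m / 3) + 1).toNat := by
  have himg : (Finset.Icc (-m) m).filter (fun a => 3 ∣ a) =
      (Finset.Icc (-(m / 3)) (m / 3)).image (fun k => 3 * k) := by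
    ext a
    simp only [Finset.mem_filter, Finset.mem_Icc, Finset.mem_image]
    constructor
    · rintro ⟨⟨h1, h2⟩, k, rfl⟩
      exact ⟨k, ⟨by omega, by omega⟩, rfl⟩
    · rintro ⟨k, ⟨h1, h2⟩, rfl⟩
      exact ⟨⟨by omega, by omega⟩, ⟨k, rfl⟩⟩
  rw [himg, Finset.card_image_of_injective _ (fun a b h => by omega), Int.card_Icc]
  congr 1
  ring

lemma nondvd3_card (m : ℤ) :
    (((Finset.Icc (-m) m).filter (fun a => ¬ (3 ∣ a))).card : ℤ)
      = (2 * m + 1).toNat - ((2 * (m / 3) + 1).toNat : ℤ) := by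
  have h := Finset.card_filter_add_card_filter_not
    (s := Finset.Icc (-m) m) (p := fun a => (3 ∣ a))
  rw [three_card] at h
  have hIcc : (Finset.Icc (-m) m).card = (2 * m + 1).toNat := by
    rw [Int.card_Icc]; congr 1; ring
  rw [hIcc] at h
  omega

lemma Icc_card_int (m : ℤ) : (Finset.Icc (-m) m).card = (2 * m + 1).toNat := by
  rw [Int.card_Icc]; congr 1; ring

/-! ### Example 1 : the even-even lattice, density 1/4 -/

lemma nbr_ex1 : ∀ x ∈ {x : ℤ × ℤ | 2 ∣ x.1 ∧ 2 ∣ x.2},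
    nbrCount {x : ℤ × ℤ | 2 ∣ x.1 ∧ 2 ∣ x.2} x ≤ 0 := by
  intro x hx
  simp only [Set.mem_setOf_eq] at hx
  have : {y ∈ {x : ℤ × ℤ | 2 ∣ x.1 ∧ 2 ∣ x.2} | IsNbr x y} = ∅ := by
    ext y
    simp only [Set.mem_setOf_eq, Set.mem_empty_iff_false, iff_false, not_and]
    rintro ⟨hy1, hy2⟩ ⟨hne, h1, h2⟩
    rw [abs_le] at h1 h2
    have hne' : y.1 ≠ x.1 ∨ y.2 ≠ x.2 := by
      by_contra hcon; push_neg at hcon; exact hne (Prod.ext hcon.1 hcon.2)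
    omega
  rw [nbrCount, this]
  simp

lemma dens_ex1 : HasDensity {x : ℤ × ℤ | 2 ∣ x.1 ∧ 2 ∣ x.2} (1 / 4) := by
  apply hasDensity_aux _ 1 (-2) 1 0 0 _ (by norm_num)
  filter_upwards [eventually_ge_atTop 1] with r hr
  have hrz : (1 : ℤ) ≤ (r : ℤ) := by exact_mod_cast hr
  set m : ℤ := (r : ℤ) - 1 with hm
  have hinter : ({x : ℤ × ℤ | 2 ∣ x.1 ∧ 2 ∣ x.2} ∩ box r) =
      ↑(((Finset.Icc (-m) m).filter (fun a => 2 ∣ a)) ×ˢ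
        ((Finset.Icc (-m) m).filter (fun a => 2 ∣ a))) := by
    ext ⟨a, b⟩
    simp only [Set.mem_inter_iff, Set.mem_setOf_eq, box, Finset.coe_product, Set.mem_prod,
      Finset.mem_coe, Finset.mem_filter, Finset.mem_Icc, abs_lt, hm]
    omega
  have hE := even_card m
  have hEb : (r : ℤ) - 1 ≤ (((Finset.Icc (-m) m).filter (fun a => 2 ∣ a)).card : ℤ) ∧
      (((Finset.Icc (-m) m).filter (fun a => 2 ∣ a)).card : ℤ) ≤ (r : ℤ) := by
    omega
  have hncard : (({x : ℤ × ℤ | 2 ∣ x.1 ∧ 2 ∣ x.2} ∩ box r).ncard : ℝ) =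
      (((Finset.Icc (-m) m).filter (fun a => 2 ∣ a)).card : ℝ) *
      (((Finset.Icc (-m) m).filter (fun a => 2 ∣ a)).card : ℝ) := by
    rw [hinter, Set.ncard_coe_finset, Finset.card_product]
    push_cast
    ring
  have hE1 : (r : ℝ) - 1 ≤ (((Finset.Icc (-m) m).filter (fun a => 2 ∣ a)).card : ℝ) := by
    exact_mod_cast hEb.1
  have hE2 : (((Finset.Icc (-m) m).filter (fun a => 2 ∣ a)).card : ℝ) ≤ (r : ℝ) := by
    exact_mod_cast hEb.2
  have hr1 : (1 : ℝ) ≤ (r : ℝ) := by exact_mod_cast hr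
  rw [hncard]
  constructor
  · nlinarith
  · nlinarith

/-! ### Example 2 : the mod-3 strip pattern, density 1/3 -/

lemma nbr_ex2 : ∀ x ∈ {x : ℤ × ℤ | (x.1 ≡ 1 [ZMOD 3] ∨ x.1 ≡ -1 [ZMOD 3]) ∧ 2 ∣ x.2},
    nbrCount {x : ℤ × ℤ | (x.1 ≡ 1 [ZMOD 3] ∨ x.1 ≡ -1 [ZMOD 3]) ∧ 2 ∣ x.2} x ≤ 1 := by
  intro x hx
  simp only [Set.mem_setOf_eq, Int.ModEq] at hx
  have hsub : {y ∈ {x : ℤ × ℤ | (x.1 ≡ 1 [ZMOD 3] ∨ x.1 ≡ -1 [ZMOD 3]) ∧ 2 ∣ x.2} | IsNbr x y} ⊆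
      {((if x.1 % 3 = 1 then x.1 + 1 else x.1 - 1), x.2)} := by
    rintro y ⟨hyS, hne, h1, h2⟩
    simp only [Set.mem_setOf_eq, Int.ModEq] at hyS
    rw [abs_le] at h1 h2
    have hne' : y.1 ≠ x.1 ∨ y.2 ≠ x.2 := by
      by_contra hcon; push_neg at hcon; exact hne (Prod.ext hcon.1 hcon.2)
    simp only [Set.mem_singleton_iff, Prod.ext_iff]
    split <;> omega
  calc nbrCount {x : ℤ × ℤ | (x.1 ≡ 1 [ZMOD 3] ∨ x.1 ≡ -1 [ZMOD 3]) ∧ 2 ∣ x.2} x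
      ≤ ({((if x.1 % 3 = 1 then x.1 + 1 else x.1 - 1), x.2)} : Set (ℤ × ℤ)).ncard :=
        Set.ncard_le_ncard hsub (Set.finite_singleton _)
    _ = 1 := Set.ncard_singleton _

lemma dens_ex2 : HasDensity {x : ℤ × ℤ | (x.1 ≡ 1 [ZMOD 3] ∨ x.1 ≡ -1 [ZMOD 3]) ∧ 2 ∣ x.2}
    (1 / 3) := by
  apply hasDensity_aux _ (4/3) (-8/3) (4/3) 0 0 _ (by norm_num)
  filter_upwards [eventually_ge_atTop 1] with r hr
  have hrz : (1 : ℤ) ≤ (r : ℤ) := by exact_mod_cast hr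
  set m : ℤ := (r : ℤ) - 1 with hm
  have hinter : ({x : ℤ × ℤ | (x.1 ≡ 1 [ZMOD 3] ∨ x.1 ≡ -1 [ZMOD 3]) ∧ 2 ∣ x.2} ∩ box r) =
      ↑(((Finset.Icc (-m) m).filter (fun a => ¬ (3 ∣ a))) ×ˢ
        ((Finset.Icc (-m) m).filter (fun a => 2 ∣ a))) := by
    ext ⟨a, b⟩
    simp only [Set.mem_inter_iff, Set.mem_setOf_eq, box, Finset.coe_product, Set.mem_prod,
      Finset.mem_coe, Finset.mem_filter, Finset.mem_Icc, abs_lt, hm, Int.ModEq]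
    omega
  have hE := even_card m
  have hF := nondvd3_card m
  have hEb : (r : ℤ) - 1 ≤ (((Finset.Icc (-m) m).filter (fun a => 2 ∣ a)).card : ℤ) ∧
      (((Finset.Icc (-m) m).filter (fun a => 2 ∣ a)).card : ℤ) ≤ (r : ℤ) := by
    omega
  have hFb : 4 * ((r : ℤ) - 1) ≤ 3 * (((Finset.Icc (-m) m).filter (fun a => ¬ (3 ∣ a))).card : ℤ) ∧
      3 * (((Finset.Icc (-m) m).filter (fun a => ¬ (3 ∣ a))).card : ℤ) ≤ 4 * (r : ℤ) := by
    omega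
  have hncard : (({x : ℤ × ℤ | (x.1 ≡ 1 [ZMOD 3] ∨ x.1 ≡ -1 [ZMOD 3]) ∧ 2 ∣ x.2} ∩ box r).ncard : ℝ) =
      (((Finset.Icc (-m) m).filter (fun a => ¬ (3 ∣ a))).card : ℝ) *
      (((Finset.Icc (-m) m).filter (fun a => 2 ∣ a)).card : ℝ) := by
    rw [hinter, Set.ncard_coe_finset, Finset.card_product]
    push_cast
    ring
  have hE1 : (r : ℝ) - 1 ≤ (((Finset.Icc (-m) m).filter (fun a => 2 ∣ a)).card : ℝ) := by
    exact_mod_cast hEb.1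
  have hE2 : (((Finset.Icc (-m) m).filter (fun a => 2 ∣ a)).card : ℝ) ≤ (r : ℝ) := by
    exact_mod_cast hEb.2
  have hF1 : 4 * ((r : ℝ) - 1) ≤ 3 * (((Finset.Icc (-m) m).filter (fun a => ¬ (3 ∣ a))).card : ℝ) := by
    exact_mod_cast hFb.1
  have hF2 : 3 * (((Finset.Icc (-m) m).filter (fun a => ¬ (3 ∣ a))).card : ℝ) ≤ 4 * (r : ℝ) := by
    exact_mod_cast hFb.2
  have hr1 : (1 : ℝ) ≤ (r : ℝ) := by exact_mod_cast hr
  have hFpos : (0 : ℝ) ≤ (((Finset.Icc (-m) m).filter (fun a => ¬ (3 ∣ a))).card : ℝ) := by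
    positivity
  rw [hncard]
  constructor
  · nlinarith
  · nlinarith

/-! ### Example 3 : even columns, density 1/2 -/

lemma nbr_ex3 : ∀ x ∈ {x : ℤ × ℤ | 2 ∣ x.1},
    nbrCount {x : ℤ × ℤ | 2 ∣ x.1} x ≤ 2 := by
  intro x hx
  simp only [Set.mem_setOf_eq] at hx
  have hsub : {y ∈ {x : ℤ × ℤ | 2 ∣ x.1} | IsNbr x y} ⊆
      {(x.1, x.2 - 1), (x.1, x.2 + 1)} := by
    rintro y ⟨hyS, hne, h1, h2⟩
    simp only [Set.mem_setOf_eq] at hyS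
    rw [abs_le] at h1 h2
    have hne' : y.1 ≠ x.1 ∨ y.2 ≠ x.2 := by
      by_contra hcon; push_neg at hcon; exact hne (Prod.ext hcon.1 hcon.2)
    simp only [Set.mem_insert_iff, Set.mem_singleton_iff, Prod.ext_iff]
    omega
  calc nbrCount {x : ℤ × ℤ | 2 ∣ x.1} x
      ≤ ({(x.1, x.2 - 1), (x.1, x.2 + 1)} : Set (ℤ × ℤ)).ncard :=
        Set.ncard_le_ncard hsub (Set.toFinite _)
    _ ≤ 2 := by
        apply le_trans (Set.ncard_insert_le _ _)
        simp
    
lemma dens_ex3 : HasDensity {x : ℤ × ℤ | 2 ∣ x.1} (1 / 2) := by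
  apply hasDensity_aux _ 2 (-3) 1 (-1) 0 _ (by norm_num)
  filter_upwards [eventually_ge_atTop 1] with r hr
  have hrz : (1 : ℤ) ≤ (r : ℤ) := by exact_mod_cast hr
  set m : ℤ := (r : ℤ) - 1 with hm
  have hinter : ({x : ℤ × ℤ | 2 ∣ x.1} ∩ box r) =
      ↑(((Finset.Icc (-m) m).filter (fun a => 2 ∣ a)) ×ˢ (Finset.Icc (-m) m)) := by
    ext ⟨a, b⟩
    simp only [Set.mem_inter_iff, Set.mem_setOf_eq, box, Finset.coe_product, Set.mem_prod,
      Finset.mem_coe, Finset.mem_filter, Finset.mem_Icc, abs_lt, hm]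
    omega
  have hE := even_card m
  have hI := Icc_card_int m
  have hEb : (r : ℤ) - 1 ≤ (((Finset.Icc (-m) m).filter (fun a => 2 ∣ a)).card : ℤ) ∧
      (((Finset.Icc (-m) m).filter (fun a => 2 ∣ a)).card : ℤ) ≤ (r : ℤ) := by
    omega
  have hIb : ((Finset.Icc (-m) m).card : ℤ) = 2 * (r : ℤ) - 1 := by omega
  have hncard : (({x : ℤ × ℤ | 2 ∣ x.1} ∩ box r).ncard : ℝ) =
      (((Finset.Icc (-m) m).filter (fun a => 2 ∣ a)).card : ℝ) *
      (((Finset.Icc (-m) m).card : ℝ)) := by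
    rw [hinter, Set.ncard_coe_finset, Finset.card_product]
    push_cast
    ring
  have hE1 : (r : ℝ) - 1 ≤ (((Finset.Icc (-m) m).filter (fun a => 2 ∣ a)).card : ℝ) := by
    exact_mod_cast hEb.1
  have hE2 : (((Finset.Icc (-m) m).filter (fun a => 2 ∣ a)).card : ℝ) ≤ (r : ℝ) := by
    exact_mod_cast hEb.2
  have hIR : ((Finset.Icc (-m) m).card : ℝ) = 2 * (r : ℝ) - 1 := by
    exact_mod_cast hIb
  have hr1 : (1 : ℝ) ≤ (r : ℝ) := by exact_mod_cast hr
  rw [hncard, hIR]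
  constructor
  · nlinarith
  · nlinarith

theorem voronoi_bound_small_degrees :
    (∀ n : ℕ, n ≤ 3 → ∀ S : Set (ℤ × ℤ),
      (∀ x ∈ S, nbrCount S x ≤ n) → upperDensity S ≤ 1 / (4 - (n : ℝ))) ∧
    ((∀ x ∈ {x : ℤ × ℤ | 2 ∣ x.1 ∧ 2 ∣ x.2},
        nbrCount {x : ℤ × ℤ | 2 ∣ x.1 ∧ 2 ∣ x.2} x ≤ 0) ∧
      HasDensity {x : ℤ × ℤ | 2 ∣ x.1 ∧ 2 ∣ x.2} (1 / 4)) ∧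
    ((∀ x ∈ {x : ℤ × ℤ | (x.1 ≡ 1 [ZMOD 3] ∨ x.1 ≡ -1 [ZMOD 3]) ∧ 2 ∣ x.2},
        nbrCount {x : ℤ × ℤ | (x.1 ≡ 1 [ZMOD 3] ∨ x.1 ≡ -1 [ZMOD 3]) ∧ 2 ∣ x.2} x ≤ 1) ∧
      HasDensity {x : ℤ × ℤ | (x.1 ≡ 1 [ZMOD 3] ∨ x.1 ≡ -1 [ZMOD 3]) ∧ 2 ∣ x.2} (1 / 3)) ∧
    ((∀ x ∈ {x : ℤ × ℤ | 2 ∣ x.1},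
        nbrCount {x : ℤ × ℤ | 2 ∣ x.1} x ≤ 2) ∧
      HasDensity {x : ℤ × ℤ | 2 ∣ x.1} (1 / 2)) := by
  exact ⟨part1, ⟨nbr_ex1, dens_ex1⟩, ⟨nbr_ex2, dens_ex2⟩, ⟨nbr_ex3, dens_ex3⟩⟩
end
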